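/- Let K be a field, B = K[X₁,…,Xᵣ] a polynomial algebra contained in the even part A₀ of a finitely generated super-commutative K-superalgebra A with A₀ integral over B, and let y₁,…,yₛ ∈ A₁ be odd elements. If Ann_B(y₁⋯yₛ) = 0 (no nonzero element of B annihilates the product y₁⋯yₛ), then the B-superalgebra map ν from the exterior algebra B[Y₁,…,Yₛ] = Λ_B(Y₁,…,Yₛ) to A defined by ν(Yᵢ) = yᵢ is injective. -/

import Mathlib

/-- **super Noether normalization, injectivity.** Let `A` be a
finitely generated super-commutative superalgebra over a field `K`,
`B = K[X₁,…,Xᵣ]` a polynomial subalgebra of `A₀` (given by an injective ring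
homomorphism `φ` with image in `𝒜 0`) over which `A₀` is integral, and
`y₁,…,yₛ` odd elements.  If no nonzero element of `B` annihilates `y₁⋯yₛ`, then
the `B`-superalgebra map `ν : Λ_B(Y₁,…,Yₛ) → A`, `ν(Yᵢ) = yᵢ`, is injective;
equivalently, the monomials `y^I`, `I ⊆ {1,…,s}`, are linearly independent
over `B`. -/
theorem superNoetherNormalization_injective
    {K : Type*} [Field K] {R : Type*} [Ring R] [Algebra K R]
    [Algebra.FiniteType K R]
    (𝒜 : ZMod 2 → AddSubgroup R) [GradedRing 𝒜]
    (hc0 : ∀ r s : R, r ∈ 𝒜 0 → r * s = s * r)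
    (hsq : ∀ s : R, s ∈ 𝒜 1 → s * s = 0)
    (r s : ℕ) (φ : MvPolynomial (Fin r) K →+* R)
    (hφinj : Function.Injective φ)
    (hφ0 : ∀ b, φ b ∈ 𝒜 0)
    (hint : ∀ a ∈ 𝒜 0, φ.IsIntegralElem a)
    (y : Fin s → R) (hy : ∀ i, y i ∈ 𝒜 1)
    (hann : ∀ b, φ b * (List.ofFn y).prod = 0 → b = 0) :
    ∀ a : Finset (Fin s) → MvPolynomial (Fin r) K,
      (∑ I : Finset (Fin s), φ (a I) * ((I.sort (· ≤ ·)).map y).prod) = 0 →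
      ∀ I, a I = 0 := by
  intro a h
  -- odd elements anticommute
  have hodd : ∀ u v : R, u ∈ 𝒜 1 → v ∈ 𝒜 1 → u * v = -(v * u) := by
    intro u v hu hv
    have h1 := hsq (u + v) (AddSubgroup.add_mem _ hu hv)
    rw [add_mul, mul_add, mul_add, hsq u hu, hsq v hv, zero_add, add_zero] at h1
    exact eq_neg_of_add_eq_zero_left h1
  -- permutations change products of odd elements only by a sign
  have hperm : ∀ {l l' : List (Fin s)}, l.Perm l' →
      (l.map y).prod = (l'.map y).prod ∨ (l.map y).prod = -((l'.map y).prod) := by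
    intro l l' hp
    induction hp with
    | nil => left; rfl
    | cons x _ ih =>
        rcases ih with h'|h' <;> simp [List.map_cons, List.prod_cons, h', mul_neg]
    | swap u v l =>
        right
        simp only [List.map_cons, List.prod_cons, ← mul_assoc,
          hodd (y v) (y u) (hy v) (hy u), neg_mul]
    | trans _ _ ih1 ih2 =>
        rcases ih1 with h1|h1 <;> rcases ih2 with h2|h2 <;>
          simp [h1, h2, neg_neg]
  -- a list with a duplicate has zero product
  have hdup : ∀ l : List (Fin s), ¬ l.Nodup → (l.map y).prod = 0 := by
    intro l
    induction l with
    | nil => intro h'; exact absurd List.nodup_nil h'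
    | cons x xs ih =>
        intro hnd
        by_cases hx : x ∈ xs
        · have hp : (x :: xs).Perm (x :: x :: xs.erase x) :=
            List.Perm.cons x (List.perm_cons_erase hx)
          have hz : ((x :: x :: xs.erase x).map y).prod = 0 := by
            simp [List.map_cons, List.prod_cons, ← mul_assoc, hsq (y x) (hy x)]
          rcases hperm hp with h'|h'
          · rw [h', hz]
          · rw [h', hz, neg_zero]
        · have : ¬ xs.Nodup := by
            intro hn; exact hnd (List.nodup_cons.mpr ⟨hx, hn⟩)
          simp [List.map_cons, List.prod_cons, ih this]
  -- main argument: strong induction on card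
  suffices H : ∀ n (I : Finset (Fin s)), I.card = n → a I = 0 by
    intro I; exact H I.card I rfl
  intro n
  induction n using Nat.strong_induction_on with
  | _ n IH =>
    intro I hIcard
    set z := ((Iᶜ.sort (· ≤ ·)).map y).prod with hz
    have h2 : ∑ J : Finset (Fin s),
        φ (a J) * (((J.sort (· ≤ ·)).map y).prod * z) = 0 := by
      have := congrArg (· * z) h
      simpa [Finset.sum_mul, mul_assoc] using this
    have hterm : ∀ J ∈ (Finset.univ : Finset (Finset (Fin s))), J ≠ I →
        φ (a J) * (((J.sort (· ≤ ·)).map y).prod * z) = 0 := by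
      intro J _ hJ
      by_cases hJI : J ⊆ I
      · have hss : J ⊂ I := ssubset_of_subset_of_ne hJI hJ
        have : a J = 0 := IH J.card (hIcard ▸ Finset.card_lt_card hss) J rfl
        simp [this]
      · obtain ⟨k, hkJ, hkI⟩ := Finset.not_subset.mp hJI
        have hp : ((J.sort (· ≤ ·)).map y).prod * z =
            (((J.sort (· ≤ ·) ++ Iᶜ.sort (· ≤ ·)).map y)).prod := by
          rw [List.map_append, List.prod_append]
        rw [hp, hdup, mul_zero]
        intro hnd
        rcases List.nodup_append'.mp hnd with ⟨_, _, hdisj⟩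
        have hm1 : k ∈ J.sort (· ≤ ·) := by simp [hkJ]
        have hm2 : k ∈ Iᶜ.sort (· ≤ ·) := by simp [hkI]
        exact hdisj hm1 hm2
    have h3 : φ (a I) * (((I.sort (· ≤ ·)).map y).prod * z) = 0 := by
      rw [← Finset.sum_eq_single_of_mem I (Finset.mem_univ I) hterm]
      exact h2
    have hfull : (I.sort (· ≤ ·) ++ Iᶜ.sort (· ≤ ·)).Perm (List.finRange s) := by
      apply List.perm_of_nodup_nodup_toFinset_eq
      · refine List.Nodup.append (Finset.sort_nodup _ _) (Finset.sort_nodup _ _) ?_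
        intro x hx hx'
        simp only [Finset.mem_sort] at hx hx'
        exact (Finset.mem_compl.mp hx') hx
      · exact List.nodup_finRange s
      · ext x
        simp [List.mem_toFinset, List.mem_finRange, Finset.mem_sort,
          Finset.mem_compl, or_comm, em]
    have hpz : ((I.sort (· ≤ ·)).map y).prod * z =
        ((I.sort (· ≤ ·) ++ Iᶜ.sort (· ≤ ·)).map y).prod := by
      rw [List.map_append, List.prod_append]
    have hofn : ((List.finRange s).map y).prod = (List.ofFn y).prod := by
      rw [List.ofFn_eq_map]
    rcases hperm hfull with he|he
    · apply hann
      rw [← hofn, ← he, ← hpz, h3]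
    · have : φ (-(a I)) * (List.ofFn y).prod = 0 := by
        rw [map_neg, neg_mul, ← hofn, ← neg_neg (((List.finRange s).map y).prod),
          ← he, ← hpz]
        simp [h3]
      have := hann _ this
      simpa using this
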